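/- Let λ < 0, a > 0, c ∈ ℝ, and ω⁻ < 0 < ω⁺ with ω⁻, ω⁺ ∈ [ω⁻, ω⁺] =: Ω. Define C⁻ = {v : F_{ω⁻}(v) < 0 and F_{ω⁺}(v) < 0} where F_ω(s,t) = λ²t + ω(λ(c+as) + aω). If v ∈ C⁻, then for every constant control ω̂ ∈ Ω and every τ < 0, the solution φ(τ, v, ω̂) of s' = ω̂, t' = λt + ω̂(c+as) remains in C⁻. -/

import Mathlib

/-- Negative-time invariance of C⁻ = {v : F_{ω⁻}(v) < 0 ∧ F_{ω⁺}(v) < 0} for the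
system s' = ω̂, t' = λt + ω̂(c+as) with constant control ω̂ ∈ Ω = [ω⁻, ω⁺]. -/
theorem stmt11 (a c lam ωm ωp ωhat : ℝ) (hlam : lam < 0) (ha : 0 < a)
    (hωm : ωm < 0) (hωp : 0 < ωp) (hωhat : ωhat ∈ Set.Icc ωm ωp)
    (F : ℝ → ℝ × ℝ → ℝ)
    (hF : ∀ ω : ℝ, ∀ p : ℝ × ℝ,
      F ω p = lam ^ 2 * p.2 + ω * (lam * (c + a * p.1) + a * ω))
    (v : ℝ × ℝ) (hv : F ωm v < 0 ∧ F ωp v < 0)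
    (φ : ℝ → ℝ × ℝ) (h0 : φ 0 = v)
    (hode : ∀ τ : ℝ,
      HasDerivAt φ (ωhat, lam * (φ τ).2 + ωhat * (c + a * (φ τ).1)) τ) :
    ∀ τ : ℝ, τ < 0 → F ωm (φ τ) < 0 ∧ F ωp (φ τ) < 0 := by
  obtain ⟨hv1, hv2⟩ := hv
  obtain ⟨hh1, hh2⟩ := hωhat
  rw [hF ωm v] at hv1
  rw [hF ωp v] at hv2
  have hpm : ωm < ωp := lt_trans hωm hωp
  -- component derivatives
  have hs : ∀ τ : ℝ, HasDerivAt (fun τ => (φ τ).1) ωhat τ := by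
    intro τ
    have := ((ContinuousLinearMap.fst ℝ ℝ ℝ).hasFDerivAt
      (x := φ τ)).comp_hasDerivAt τ (hode τ)
    simpa [Function.comp_def] using this
  have ht : ∀ τ : ℝ, HasDerivAt (fun τ => (φ τ).2)
      (lam * (φ τ).2 + ωhat * (c + a * (φ τ).1)) τ := by
    intro τ
    have := ((ContinuousLinearMap.snd ℝ ℝ ℝ).hasFDerivAt
      (x := φ τ)).comp_hasDerivAt τ (hode τ)
    simpa [Function.comp_def] using this
  -- derivative of u ω
  have hU : ∀ (ω : ℝ) (τ : ℝ), HasDerivAt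
      (fun τ => lam ^ 2 * (φ τ).2 + ω * (lam * (c + a * (φ τ).1) + a * ω))
      (lam ^ 2 * (lam * (φ τ).2 + ωhat * (c + a * (φ τ).1)) + ω * (lam * (a * ωhat))) τ := by
    intro ω τ
    exact ((ht τ).const_mul (lam ^ 2)).add
      (((((hs τ).const_mul a).const_add c).const_mul lam).add_const (a * ω) |>.const_mul ω)
  -- convexity: F ω v < 0 for all ω ∈ [ωm, ωp]
  have hconv : ∀ ω : ℝ, ωm ≤ ω → ω ≤ ωp →
      lam ^ 2 * v.2 + ω * (lam * (c + a * v.1) + a * ω) < 0 := by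
    intro ω h1 h2
    rcases eq_or_lt_of_le h1 with h | h
    · rw [← h]; exact hv1
    · nlinarith [mul_nonneg (sub_nonneg.2 h2) (le_of_lt (neg_pos.2 hv1)),
        mul_pos (sub_pos.2 h) (neg_pos.2 hv2),
        mul_nonneg (mul_nonneg (mul_nonneg ha.le (sub_pos.2 h).le) (sub_nonneg.2 h2))
          (sub_pos.2 hpm).le,
        sub_pos.2 hpm]
  have hChat : lam ^ 2 * v.2 + ωhat * (lam * (c + a * v.1) + a * ωhat) < 0 :=
    hconv ωhat hh1 hh2
  -- F ωhat ∘ φ is exactly exponential: u(τ) * exp(-lam τ) is constant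
  have hgdz : ∀ x : ℝ, HasDerivAt
      (fun τ => (lam ^ 2 * (φ τ).2 + ωhat * (lam * (c + a * (φ τ).1) + a * ωhat))
        * Real.exp (-(lam * τ))) 0 x := by
    intro x
    have h2 : HasDerivAt (fun τ : ℝ => Real.exp (-(lam * τ)))
        (Real.exp (-(lam * x)) * (-lam)) x := by
      have := (((hasDerivAt_id x).const_mul (-lam)).exp)
      simpa [neg_mul, mul_comm] using this
    have := (hU ωhat x).mul h2
    exact this.congr_deriv (by ring)
  have hGconst : ∀ τ : ℝ,
      (lam ^ 2 * (φ τ).2 + ωhat * (lam * (c + a * (φ τ).1) + a * ωhat))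
        * Real.exp (-(lam * τ))
      = lam ^ 2 * v.2 + ωhat * (lam * (c + a * v.1) + a * ωhat) := by
    intro τ
    have hd : Differentiable ℝ
        (fun τ => (lam ^ 2 * (φ τ).2 + ωhat * (lam * (c + a * (φ τ).1) + a * ωhat))
          * Real.exp (-(lam * τ))) := fun x => (hgdz x).differentiableAt
    have := is_const_of_deriv_eq_zero hd (fun x => (hgdz x).deriv) τ 0
    simpa [h0] using this
  -- λ² t is strictly increasing, hence negative on τ ≤ 0
  have hW : StrictMono (fun τ => lam ^ 2 * (φ τ).2) := by
    apply strictMono_of_deriv_pos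
    intro x
    rw [((ht x).const_mul (lam ^ 2)).deriv]
    have hx := hGconst x
    have hux : lam ^ 2 * (φ x).2 + ωhat * (lam * (c + a * (φ x).1) + a * ωhat) < 0 := by
      nlinarith [Real.exp_pos (-(lam * x)), hx, hChat]
    nlinarith [mul_pos (neg_pos.2 hlam) (neg_pos.2 hux),
      mul_nonneg (mul_nonneg (neg_pos.2 hlam).le ha.le) (sq_nonneg ωhat)]
  have hTneg : ∀ τ : ℝ, τ ≤ 0 → lam ^ 2 * (φ τ).2 < 0 := by
    intro τ hτ
    have hz : lam ^ 2 * (φ (0:ℝ)).2 < 0 := by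
      have := hconv 0 hωm.le hωp.le
      simpa [h0] using this
    rcases lt_or_eq_of_le hτ with h | h
    · exact lt_trans (hW h) hz
    · rw [h]; exact hz
  -- key monotonicity lemma
  have key : ∀ ω : ℝ, ω ≠ 0 → 0 ≤ (ω - ωhat) / ω →
      lam ^ 2 * v.2 + ω * (lam * (c + a * v.1) + a * ω) < 0 →
      ∀ τ : ℝ, τ < 0 →
        lam ^ 2 * (φ τ).2 + ω * (lam * (c + a * (φ τ).1) + a * ω) < 0 := by
    intro ω hω hsgn hv0 τ hτ
    set μ : ℝ := lam * ωhat / ω with hμ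
    have hz : ∀ x : ℝ, HasDerivAt
        (fun τ => (lam ^ 2 * (φ τ).2 + ω * (lam * (c + a * (φ τ).1) + a * ω))
          * Real.exp (-(μ * τ)))
        ((lam ^ 2 * (lam * (φ x).2 + ωhat * (c + a * (φ x).1)) + ω * (lam * (a * ωhat)))
            * Real.exp (-(μ * x))
          + (lam ^ 2 * (φ x).2 + ω * (lam * (c + a * (φ x).1) + a * ω))
            * (Real.exp (-(μ * x)) * (-μ))) x := by
      intro x
      have h2 : HasDerivAt (fun τ : ℝ => Real.exp (-(μ * τ)))
          (Real.exp (-(μ * x)) * (-μ)) x := by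
        have := (((hasDerivAt_id x).const_mul (-μ)).exp)
        simpa [neg_mul, mul_comm] using this
      exact (hU ω x).mul h2
    have hmono : MonotoneOn
        (fun τ => (lam ^ 2 * (φ τ).2 + ω * (lam * (c + a * (φ τ).1) + a * ω))
          * Real.exp (-(μ * τ))) (Set.Iic (0:ℝ)) := by
      apply monotoneOn_of_deriv_nonneg (convex_Iic 0)
      · exact (fun x _ => ((hz x).differentiableAt).continuousAt.continuousWithinAt)
      · exact fun x _ => ((hz x).differentiableAt).differentiableWithinAt
      · intro x hx
        rw [interior_Iic] at hx
        rw [(hz x).deriv]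
        have h1 : 0 < lam * (lam ^ 2 * (φ x).2) :=
          mul_pos_of_neg_of_neg hlam (hTneg x (le_of_lt hx))
        have hiden :
            (lam ^ 2 * (lam * (φ x).2 + ωhat * (c + a * (φ x).1)) + ω * (lam * (a * ωhat)))
              + (lam ^ 2 * (φ x).2 + ω * (lam * (c + a * (φ x).1) + a * ω)) * (-μ)
            = (lam * (lam ^ 2 * (φ x).2)) * ((ω - ωhat) / ω) := by
          rw [hμ]
          field_simp
          ring
        have hfact :
            (lam ^ 2 * (lam * (φ x).2 + ωhat * (c + a * (φ x).1)) + ω * (lam * (a * ωhat)))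
                * Real.exp (-(μ * x))
              + (lam ^ 2 * (φ x).2 + ω * (lam * (c + a * (φ x).1) + a * ω))
                * (Real.exp (-(μ * x)) * (-μ))
            = Real.exp (-(μ * x)) *
              ((lam ^ 2 * (lam * (φ x).2 + ωhat * (c + a * (φ x).1)) + ω * (lam * (a * ωhat)))
                + (lam ^ 2 * (φ x).2 + ω * (lam * (c + a * (φ x).1) + a * ω)) * (-μ)) := by
          ring
        rw [hfact, hiden]
        exact mul_nonneg (Real.exp_pos _).le (mul_nonneg h1.le hsgn)
    have hle := hmono (Set.mem_Iic.2 hτ.le) (Set.mem_Iic.2 le_rfl) hτ.le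
    have hZ0 : (lam ^ 2 * (φ (0:ℝ)).2 + ω * (lam * (c + a * (φ (0:ℝ)).1) + a * ω))
        * Real.exp (-(μ * 0)) < 0 := by
      simpa [h0] using hv0
    have hZτ : (lam ^ 2 * (φ τ).2 + ω * (lam * (c + a * (φ τ).1) + a * ω))
        * Real.exp (-(μ * τ)) < 0 := lt_of_le_of_lt hle hZ0
    nlinarith [Real.exp_pos (-(μ * τ)), hZτ]
  intro τ hτ
  rw [hF ωm (φ τ), hF ωp (φ τ)]
  constructor
  · exact key ωm hωm.ne
      (by rw [div_nonneg_iff]; right; constructor <;> linarith) hv1 τ hτ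
  · exact key ωp hωp.ne'
      (div_nonneg (by linarith) hωp.le) hv2 τ hτ
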